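/- For every k ≥ 1, 2^(k-1) ≤ Φ(2^k + 2, 2^(k-1)) ≤ 2^(k-1) + 1. -/
import Mathlib


/-- `f x = max {y : ℕ | y * (y + 1) ≤ x}`. -/
def f (x : ℕ) : ℕ := Nat.findGreatest (fun y => y * (y + 1) ≤ x) x

/-- `Phi a L = max {f a₁ + ⋯ + f a_L : a₁ + ⋯ + a_L ≤ a}`. -/
noncomputable def Phi (a L : ℕ) : ℕ :=
  sSup {s | ∃ g : Fin L → ℕ, (∑ i, g i) ≤ a ∧ s = ∑ i, f (g i)}

lemma two_mul_f_le (x : ℕ) : 2 * f x ≤ x := by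
  rcases Nat.eq_zero_or_pos (f x) with h | h
  · simp [h]
  · have hspec : f x * (f x + 1) ≤ x :=
      (Nat.findGreatest_eq_iff.1 (rfl : f x = f x)).2.1 h.ne'
    calc 2 * f x = f x * 2 := by ring
    _ ≤ f x * (f x + 1) := by
        apply Nat.mul_le_mul_left
        omega
    _ ≤ x := hspec

lemma f_two : f 2 = 1 := by decide

theorem Phi_two_pow (k : ℕ) (hk : 1 ≤ k) :
    2 ^ (k - 1) ≤ Phi (2 ^ k + 2) (2 ^ (k - 1)) ∧
      Phi (2 ^ k + 2) (2 ^ (k - 1)) ≤ 2 ^ (k - 1) + 1 := by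
  set L := 2 ^ (k - 1) with hL
  have hpow : 2 ^ k = 2 * L := by
    rw [hL, ← pow_succ']
    congr 1
    omega
  set S := {s | ∃ g : Fin L → ℕ, (∑ i, g i) ≤ 2 ^ k + 2 ∧ s = ∑ i, f (g i)} with hS
  have hub : ∀ s ∈ S, s ≤ L + 1 := by
    rintro s ⟨g, hg, rfl⟩
    have h2 : 2 * ∑ i, f (g i) ≤ 2 ^ k + 2 := by
      calc 2 * ∑ i, f (g i) = ∑ i, 2 * f (g i) := by rw [Finset.mul_sum]
      _ ≤ ∑ i, g i := Finset.sum_le_sum fun i _ => two_mul_f_le (g i)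
      _ ≤ 2 ^ k + 2 := hg
    omega
  have hbdd : BddAbove S := ⟨L + 1, hub⟩
  have hmem : L ∈ S := by
    refine ⟨fun _ => 2, ?_, ?_⟩
    · simp [Finset.sum_const, hpow]
      omega
    · simp [f_two]
  constructor
  · exact le_csSup hbdd hmem
  · exact csSup_le ⟨L, hmem⟩ hub
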